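/- arXiv:2106.02114 — 2 statements merged into one kernel-verified Lean document; each statement's English description precedes it below -/
import Mathlib

section
/- Let D be a finite directed graph with vertex s and let D' be its reduced undirected graph. Then g(D', s) = 1 if (D,s) is a P-position of Directed Geography (i.e., g⃗(D,s) = 0), and g(D', s) ≥ 2 if (D,s) is an N-position of Directed Geography (i.e., g⃗(D,s) ≠ 0). In particular, g(D',s) = 1 if and only if g⃗(D,s) = 0. -/
noncomputable def mex (s : Finset ℕ) : ℕ := sInf {n : ℕ | n ∉ s}

noncomputable def geo {V : Type} [DecidableEq V] (G : SimpleGraph V) [DecidableRel G.Adj]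
    (A : Finset V) (s : V) : ℕ :=
  if h : s ∈ A then
    mex (((A.erase s).filter (fun v => G.Adj s v)).image (fun v => geo G (A.erase s) v))
  else 0
termination_by A.card
decreasing_by
  simp_wf
  exact Finset.card_erase_lt_of_mem h

/-- Vertices of the reduced undirected graph `D'` of a directed graph `D` on `V`:
original vertices (`orig`), one pendant vertex per original vertex (`pend`), and for
each arc `e` the eight gadget vertices `a, a₀, b, c, c₀, d, d₀, f`, encoded as
`gad e 0, …, gad e 7` in that order. -/
abbrev RedV (V : Type) : Type := V ⊕ V ⊕ ((V × V) × Fin 8)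

def orig {V : Type} (v : V) : RedV V := Sum.inl v
def pend {V : Type} (v : V) : RedV V := Sum.inr (Sum.inl v)
def gad {V : Type} (e : V × V) (i : Fin 8) : RedV V := Sum.inr (Sum.inr (e, i))

/-- The internal edges of the gadget for one arc, with the names
`a = 0, a₀ = 1, b = 2, c = 3, c₀ = 4, d = 5, d₀ = 6, f = 7`:
`{a,a₀}, {a,b}, {b,c}, {c,c₀}, {b,f}, {c,d}, {d,d₀}, {f,d}`. -/
def gadgetPairs : List (Fin 8 × Fin 8) :=
  [(0,1), (0,2), (2,3), (3,4), (2,7), (3,5), (5,6), (7,5)]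

/-- Base edge relation of the reduced graph `D'` of the digraph with arc set `A`:
each vertex `v` gets a pendant edge `{v, v₀}`, and each arc `(x,y) ∈ A` is replaced
by its gadget, with edges `{x,a}` and `{d,y}` to the original vertices and the
internal gadget edges. -/
def redRel {V : Type} [DecidableEq V] (A : Finset (V × V)) : RedV V → RedV V → Prop
  | Sum.inl v, Sum.inr (Sum.inl w) => v = w
  | Sum.inl v, Sum.inr (Sum.inr (e, i)) =>
      e ∈ A ∧ ((v = e.1 ∧ i = 0) ∨ (v = e.2 ∧ i = 5))
  | Sum.inr (Sum.inr (e, i)), Sum.inr (Sum.inr (e', j)) =>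
      e = e' ∧ e ∈ A ∧ (i, j) ∈ gadgetPairs
  | _, _ => False

instance {V : Type} [DecidableEq V] (A : Finset (V × V)) : DecidableRel (redRel A) :=
  fun u w => by
    rcases u with v | v | ⟨e, i⟩ <;> rcases w with v' | v' | ⟨e', j⟩ <;>
      simp only [redRel] <;> infer_instance

/-- The reduced undirected graph `D'` of the digraph with vertex type `V` and
arc set `A`. -/
def reduced {V : Type} [DecidableEq V] (A : Finset (V × V)) : SimpleGraph (RedV V) where
  Adj u w := u ≠ w ∧ (redRel A u w ∨ redRel A w u)
  symm := ⟨fun u w h => ⟨h.1.symm, h.2.symm⟩⟩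
  loopless := ⟨fun u h => h.1 rfl⟩

instance {V : Type} [DecidableEq V] (A : Finset (V × V)) : DecidableRel (reduced A).Adj :=
  fun u w => inferInstanceAs (Decidable (u ≠ w ∧ (redRel A u w ∨ redRel A w u)))


/-- The Directed Geography Grundy value for the digraph with arc set `A`, played on the
set `B` of remaining vertices with the token on `s`:
`g⃗(B,s) = mex { g⃗(B − s, v) : (s,v) ∈ A, v ∈ B − s }`. -/
noncomputable def dgeo {V : Type} [DecidableEq V] (A : Finset (V × V)) :
    Finset V → V → ℕ := fun B s =>
  if h : s ∈ B then
    mex (((B.erase s).filter (fun v => (s, v) ∈ A)).image (fun v => dgeo A (B.erase s) v))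
  else 0
termination_by B s => B.card
decreasing_by
  simp_wf
  exact Finset.card_erase_lt_of_mem h


/- ## mex lemmas -/

lemma mex_notMem (S : Finset ℕ) : mex S ∉ S := by
  have h : {n : ℕ | n ∉ S}.Nonempty := by
    obtain ⟨n, hn⟩ := S.exists_notMem
    exact ⟨n, hn⟩
  have := Nat.sInf_mem h
  exact this

lemma mex_le {S : Finset ℕ} {n : ℕ} (h : n ∉ S) : mex S ≤ n := Nat.sInf_le h

lemma mex_ne_of_mem {S : Finset ℕ} {n : ℕ} (h : n ∈ S) : mex S ≠ n := by
  intro e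
  exact mex_notMem S (e ▸ h)

lemma two_le_mex {S : Finset ℕ} (h0 : 0 ∈ S) (h1 : 1 ∈ S) : 2 ≤ mex S := by
  have := mex_ne_of_mem h0
  have := mex_ne_of_mem h1
  omega

lemma mex_eq_of {S : Finset ℕ} {n : ℕ} (hn : n ∉ S) (h : ∀ k < n, k ∈ S) : mex S = n := by
  refine le_antisymm (mex_le hn) ?_
  by_contra h'
  push_neg at h'
  exact mex_notMem S (h _ h')

lemma mex_eq_zero {S : Finset ℕ} (h : 0 ∉ S) : mex S = 0 :=
  mex_eq_of h (fun k hk => absurd hk (Nat.not_lt_zero k))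

lemma mex_eq_one {S : Finset ℕ} (h0 : 0 ∈ S) (h1 : 1 ∉ S) : mex S = 1 :=
  mex_eq_of h1 (fun k hk => by
    have hk0 : k = 0 := by omega
    rw [hk0]; exact h0)

lemma mex_eq_two {S : Finset ℕ} (h0 : 0 ∈ S) (h1 : 1 ∈ S) (h2 : 2 ∉ S) : mex S = 2 :=
  mex_eq_of h2 (fun k hk => by interval_cases k <;> assumption)

lemma mex_ne_zero {S : Finset ℕ} (h0 : 0 ∈ S) : mex S ≠ 0 := mex_ne_of_mem h0

lemma zero_mem_of_mex_ne {S : Finset ℕ} (h : mex S ≠ 0) : 0 ∈ S := by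
  by_contra h0
  exact h (mex_eq_zero h0)

/- ## geo basic lemmas -/

lemma geo_notMem {V : Type} [DecidableEq V] (G : SimpleGraph V) [DecidableRel G.Adj]
    {X : Finset V} {s : V} (hs : s ∉ X) : geo G X s = 0 := by
  rw [geo, dif_neg hs]

lemma geo_mem {V : Type} [DecidableEq V] (G : SimpleGraph V) [DecidableRel G.Adj]
    {X : Finset V} {s : V} (hs : s ∈ X) :
    geo G X s =
      mex (((X.erase s).filter (fun v => G.Adj s v)).image (fun v => geo G (X.erase s) v)) := by
  rw [geo, dif_pos hs]

/- ## localization -/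

lemma geo_localize {V : Type} [DecidableEq V] (G : SimpleGraph V) [DecidableRel G.Adj]
    (R : Finset V) :
    ∀ (X : Finset V), (∀ u ∈ R, ∀ v ∈ X, G.Adj u v → v ∈ R) → ∀ s ∈ R,
      geo G X s = geo G (X ∩ R) s := by
  intro X
  induction X using Finset.strongInduction with
  | _ X ih =>
    intro hcl s hs
    by_cases hsX : s ∈ X
    · rw [geo_mem G hsX, geo_mem G (show s ∈ X ∩ R from Finset.mem_inter.2 ⟨hsX, hs⟩)]
      have hset : ((X ∩ R).erase s).filter (fun v => G.Adj s v)
          = (X.erase s).filter (fun v => G.Adj s v) := by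
        ext v
        simp only [Finset.mem_filter, Finset.mem_erase, Finset.mem_inter]
        constructor
        · rintro ⟨⟨hvs, hvX, _⟩, hadj⟩; exact ⟨⟨hvs, hvX⟩, hadj⟩
        · rintro ⟨⟨hvs, hvX⟩, hadj⟩; exact ⟨⟨hvs, hvX, hcl s hs v hvX hadj⟩, hadj⟩
      rw [hset]
      apply congrArg mex
      apply Finset.image_congr
      intro v hv
      simp only [Finset.mem_coe, Finset.mem_filter, Finset.mem_erase] at hv
      have hvR : v ∈ R := hcl s hs v hv.1.2 hv.2
      have hrw : (X ∩ R).erase s = (X.erase s) ∩ R := by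
        ext u
        simp only [Finset.mem_erase, Finset.mem_inter]
        tauto
      rw [hrw]
      exact ih (X.erase s) (Finset.erase_ssubset hsX)
        (fun u hu v' hv' hadj => hcl u hu v' (Finset.mem_of_mem_erase hv') hadj) v hvR
    · rw [geo_notMem G hsX, geo_notMem G (fun h => hsX (Finset.mem_inter.1 h).1)]

lemma geo_localize_sub {V : Type} [DecidableEq V] (G : SimpleGraph V) [DecidableRel G.Adj]
    {R X : Finset V} (hRX : R ⊆ X) (hcl : ∀ u ∈ R, ∀ v ∈ X, G.Adj u v → v ∈ R)
    {s : V} (hs : s ∈ R) : geo G X s = geo G R s := by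
  rw [geo_localize G R X hcl s hs, Finset.inter_eq_right.mpr hRX]
/- ## dgeo lemmas -/

lemma dgeo_mem {V : Type} [DecidableEq V] (A : Finset (V × V)) {B : Finset V} {s : V}
    (hs : s ∈ B) :
    dgeo A B s =
      mex (((B.erase s).filter (fun v => (s, v) ∈ A)).image (fun v => dgeo A (B.erase s) v)) := by
  rw [dgeo, dif_pos hs]

lemma dgeo_exists {V : Type} [DecidableEq V] {A : Finset (V × V)} {B : Finset V} {s : V}
    (hs : s ∈ B) (h : dgeo A B s ≠ 0) :
    ∃ v ∈ B.erase s, (s, v) ∈ A ∧ dgeo A (B.erase s) v = 0 := by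
  rw [dgeo_mem A hs] at h
  have h0 := zero_mem_of_mex_ne h
  simp only [Finset.mem_image, Finset.mem_filter] at h0
  obtain ⟨v, ⟨hv, hA⟩, hval⟩ := h0
  exact ⟨v, hv, hA, hval⟩

lemma dgeo_all {V : Type} [DecidableEq V] {A : Finset (V × V)} {B : Finset V} {s : V}
    (hs : s ∈ B) (h : dgeo A B s = 0) :
    ∀ v ∈ B.erase s, (s, v) ∈ A → dgeo A (B.erase s) v ≠ 0 := by
  intro v hv hA hval
  rw [dgeo_mem A hs] at h
  refine mex_ne_of_mem ?_ h
  simp only [Finset.mem_image, Finset.mem_filter]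
  exact ⟨v, ⟨hv, hA⟩, hval⟩

/- ## adjacency lemmas for the reduced graph -/

section Adjacency

variable {V : Type} [DecidableEq V] {A : Finset (V × V)}

lemma adj_orig_cases {v : V} {u : RedV V} (h : (reduced A).Adj (orig v) u) :
    u = pend v ∨ ∃ e ∈ A, ((v = e.1 ∧ u = gad e 0) ∨ (v = e.2 ∧ u = gad e 5)) := by
  obtain ⟨hne, h | h⟩ := h
  · rcases u with w | w | ⟨e, i⟩ <;> simp only [redRel, orig, pend, gad] at h ⊢
    · subst h; exact Or.inl rfl
    · obtain ⟨he, h⟩ := h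
      refine Or.inr ⟨e, he, ?_⟩
      rcases h with ⟨h1, h2⟩ | ⟨h1, h2⟩
      · exact Or.inl ⟨h1, by rw [h2]⟩
      · exact Or.inr ⟨h1, by rw [h2]⟩
  · rcases u with w | w | ⟨e, i⟩ <;> simp only [redRel, orig, pend, gad] at h

lemma adj_pend_cases {v : V} {u : RedV V} (h : (reduced A).Adj (pend v) u) :
    u = orig v := by
  obtain ⟨hne, h | h⟩ := h
  · rcases u with w | w | ⟨e, i⟩ <;> simp only [redRel, orig, pend, gad] at h
  · rcases u with w | w | ⟨e, i⟩ <;> simp only [redRel, orig, pend, gad] at h ⊢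
    rw [h]

lemma adj_gad_cases {e : V × V} {i : Fin 8} {u : RedV V} (h : (reduced A).Adj (gad e i) u) :
    (i = 0 ∧ u = orig e.1) ∨ (i = 5 ∧ u = orig e.2) ∨
      ∃ j, u = gad e j ∧ ((i, j) ∈ gadgetPairs ∨ (j, i) ∈ gadgetPairs) := by
  obtain ⟨hne, h | h⟩ := h
  · rcases u with w | w | ⟨e', j⟩ <;> simp only [redRel, orig, pend, gad] at h ⊢
    obtain ⟨he', _, hp⟩ := h
    subst he'
    exact Or.inr (Or.inr ⟨j, rfl, Or.inl hp⟩)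
  · rcases u with w | w | ⟨e', j⟩ <;> simp only [redRel, orig, pend, gad] at h ⊢
    · obtain ⟨_, h⟩ := h
      rcases h with ⟨h1, h2⟩ | ⟨h1, h2⟩
      · subst h1; exact Or.inl ⟨h2, rfl⟩
      · subst h1; exact Or.inr (Or.inl ⟨h2, rfl⟩)
    · obtain ⟨he', _, hp⟩ := h
      subst he'
      exact Or.inr (Or.inr ⟨j, rfl, Or.inr hp⟩)

/- constructors -/

lemma orig_ne_pend (v w : V) : (orig v : RedV V) ≠ pend w := by
  simp [orig, pend]

lemma orig_ne_gad (v : V) (e : V × V) (i : Fin 8) : (orig v : RedV V) ≠ gad e i := by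
  simp [orig, gad]

lemma pend_ne_gad (v : V) (e : V × V) (i : Fin 8) : (pend v : RedV V) ≠ gad e i := by
  simp [pend, gad]

lemma gad_inj_iff (e e' : V × V) (i j : Fin 8) : (gad e i : RedV V) = gad e' j ↔ e = e' ∧ i = j := by
  constructor
  · intro h
    simp only [gad, Sum.inr.injEq, Prod.mk.injEq] at h
    exact h
  · rintro ⟨rfl, rfl⟩; rfl

lemma adj_op (v : V) : (reduced A).Adj (orig v) (pend v) :=
  ⟨orig_ne_pend v v, Or.inl rfl⟩

lemma adj_og1 {e : V × V} (he : e ∈ A) : (reduced A).Adj (orig e.1) (gad e 0) :=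
  ⟨orig_ne_gad _ _ _, Or.inl ⟨he, Or.inl ⟨rfl, rfl⟩⟩⟩

lemma adj_og2 {e : V × V} (he : e ∈ A) : (reduced A).Adj (orig e.2) (gad e 5) :=
  ⟨orig_ne_gad _ _ _, Or.inl ⟨he, Or.inr ⟨rfl, rfl⟩⟩⟩

lemma adj_gg {e : V × V} (he : e ∈ A) {i j : Fin 8}
    (hij : (i, j) ∈ gadgetPairs ∨ (j, i) ∈ gadgetPairs) (hne : i ≠ j) :
    (reduced A).Adj (gad e i) (gad e j) := by
  refine ⟨by simp [gad_inj_iff, hne], ?_⟩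
  rcases hij with h | h
  · exact Or.inl ⟨rfl, he, h⟩
  · exact Or.inr ⟨rfl, he, h⟩

end Adjacency
/- ## the normalized state finset -/

section State

variable {V : Type} [DecidableEq V]

def St (A : Finset (V × V)) (B : Finset V) (E : Finset (V × V)) : Finset (RedV V) :=
  B.image orig ∪ B.image pend ∪
    ((A \ E) ×ˢ (Finset.univ : Finset (Fin 8))).image (fun p => gad p.1 p.2)

@[simp] lemma mem_St_orig {A : Finset (V × V)} {B : Finset V} {E : Finset (V × V)} {v : V} :
    orig v ∈ St A B E ↔ v ∈ B := by
  simp [St, orig, pend, gad, Finset.mem_sdiff]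

@[simp] lemma mem_St_pend {A : Finset (V × V)} {B : Finset V} {E : Finset (V × V)} {v : V} :
    pend v ∈ St A B E ↔ v ∈ B := by
  simp [St, orig, pend, gad, Finset.mem_sdiff]

@[simp] lemma mem_St_gad {A : Finset (V × V)} {B : Finset V} {E : Finset (V × V)}
    {e : V × V} {i : Fin 8} : gad e i ∈ St A B E ↔ e ∈ A ∧ e ∉ E := by
  simp [St, orig, pend, gad, Finset.mem_sdiff]

lemma St_closed {A : Finset (V × V)} {B : Finset V} {E : Finset (V × V)} :
    ∀ u ∈ St A B E, ∀ v, (reduced A).Adj u v →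
      v ∈ St A B E ∨ (∃ e ∈ E, (v = gad e 0 ∧ e.1 ∈ B) ∨ (v = gad e 5 ∧ e.2 ∈ B)) ∨
        ∃ w, w ∉ B ∧ v = orig w := by
  intro u hu v hadj
  rcases u with w | w | ⟨e, i⟩
  · have hw : w ∈ B := mem_St_orig.1 hu
    rcases adj_orig_cases hadj with rfl | ⟨e, he, ⟨h1, rfl⟩ | ⟨h1, rfl⟩⟩
    · exact Or.inl (mem_St_pend.2 hw)
    · by_cases hE : e ∈ E
      · exact Or.inr (Or.inl ⟨e, hE, Or.inl ⟨rfl, h1 ▸ hw⟩⟩)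
      · exact Or.inl (mem_St_gad.2 ⟨he, hE⟩)
    · by_cases hE : e ∈ E
      · exact Or.inr (Or.inl ⟨e, hE, Or.inr ⟨rfl, h1 ▸ hw⟩⟩)
      · exact Or.inl (mem_St_gad.2 ⟨he, hE⟩)
  · have hw : w ∈ B := mem_St_pend.1 hu
    have := adj_pend_cases hadj
    subst this
    exact Or.inl (mem_St_orig.2 hw)
  · have he : e ∈ A ∧ e ∉ E := mem_St_gad.1 hu
    rcases adj_gad_cases hadj with ⟨_, rfl⟩ | ⟨_, rfl⟩ | ⟨j, rfl, _⟩
    · by_cases hB : e.1 ∈ B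
      · exact Or.inl (mem_St_orig.2 hB)
      · exact Or.inr (Or.inr ⟨e.1, hB, rfl⟩)
    · by_cases hB : e.2 ∈ B
      · exact Or.inl (mem_St_orig.2 hB)
      · exact Or.inr (Or.inr ⟨e.2, hB, rfl⟩)
    · exact Or.inl (mem_St_gad.2 he)

end State
/- ## geo helpers -/

section GeoHelpers

variable {W : Type} [DecidableEq W] (G : SimpleGraph W) [DecidableRel G.Adj]

lemma geo_step {X : Finset W} {p : W} (hp : p ∈ X) {M : Finset W}
    (hM : (X.erase p).filter (fun v => G.Adj p v) = M) :
    geo G X p = mex (M.image (fun v => geo G (X.erase p) v)) := by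
  rw [geo_mem G hp, hM]

lemma geo_no_moves {X : Finset W} {p : W} (hp : p ∈ X)
    (h : ∀ u, G.Adj p u → u ∉ X.erase p) : geo G X p = 0 := by
  rw [geo_mem G hp]
  have hf : (X.erase p).filter (fun v => G.Adj p v) = ∅ :=
    Finset.filter_eq_empty_iff.2 (fun {u} hu hadj => h u hadj hu)
  rw [hf]
  simp only [Finset.image_empty]
  exact mex_eq_zero (by simp)

lemma geo_ne_zero_of {X : Finset W} {p : W} (hp : p ∈ X) {q : W} (hq : q ∈ X) (hqp : q ≠ p)
    (hadj : G.Adj p q) (hv : geo G (X.erase p) q = 0) : geo G X p ≠ 0 := by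
  rw [geo_mem G hp]
  exact mex_ne_zero
    (Finset.mem_image.2 ⟨q, Finset.mem_filter.2 ⟨Finset.mem_erase.2 ⟨hqp, hq⟩, hadj⟩, hv⟩)

lemma two_le_geo_of {X : Finset W} {p : W} (hp : p ∈ X) {q r : W}
    (hq : q ∈ X) (hqp : q ≠ p) (hadjq : G.Adj p q) (hvq : geo G (X.erase p) q = 0)
    (hr : r ∈ X) (hrp : r ≠ p) (hadjr : G.Adj p r) (hvr : geo G (X.erase p) r = 1) :
    2 ≤ geo G X p := by
  rw [geo_mem G hp]
  exact two_le_mex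
    (Finset.mem_image.2 ⟨q, Finset.mem_filter.2 ⟨Finset.mem_erase.2 ⟨hqp, hq⟩, hadjq⟩, hvq⟩)
    (Finset.mem_image.2 ⟨r, Finset.mem_filter.2 ⟨Finset.mem_erase.2 ⟨hrp, hr⟩, hadjr⟩, hvr⟩)

end GeoHelpers

/- ## per-index adjacency case lemmas -/

section AdjIdx

variable {V : Type} [DecidableEq V] {A : Finset (V × V)} {e : V × V} {u : RedV V}

lemma gad_ne {i j : Fin 8} (h : i ≠ j) : (gad e i : RedV V) ≠ gad e j :=
  fun hg => h ((gad_inj_iff e e i j).1 hg).2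

lemma adj0_cases (h : (reduced A).Adj (gad e 0) u) :
    u = orig e.1 ∨ u = gad e 1 ∨ u = gad e 2 := by
  rcases adj_gad_cases h with ⟨hi, hu⟩ | ⟨hi, hu⟩ | ⟨j, hu, hj⟩
  · exact Or.inl hu
  · exact absurd hi (by decide)
  · have hj' : j = 1 ∨ j = 2 :=
      (by decide : ∀ j : Fin 8, (((0 : Fin 8), j) ∈ gadgetPairs ∨ (j, (0 : Fin 8)) ∈ gadgetPairs) → j = 1 ∨ j = 2) j hj
    rcases hj' with rfl | rfl
    · exact Or.inr (Or.inl hu)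
    · exact Or.inr (Or.inr hu)

lemma adj1_cases (h : (reduced A).Adj (gad e 1) u) : u = gad e 0 := by
  rcases adj_gad_cases h with ⟨hi, hu⟩ | ⟨hi, hu⟩ | ⟨j, hu, hj⟩
  · exact absurd hi (by decide)
  · exact absurd hi (by decide)
  · have hj' : j = 0 :=
      (by decide : ∀ j : Fin 8, (((1 : Fin 8), j) ∈ gadgetPairs ∨ (j, (1 : Fin 8)) ∈ gadgetPairs) → j = 0) j hj
    exact hj' ▸ hu

lemma adj2_cases (h : (reduced A).Adj (gad e 2) u) :
    u = gad e 0 ∨ u = gad e 3 ∨ u = gad e 7 := by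
  rcases adj_gad_cases h with ⟨hi, hu⟩ | ⟨hi, hu⟩ | ⟨j, hu, hj⟩
  · exact absurd hi (by decide)
  · exact absurd hi (by decide)
  · have hj' : j = 0 ∨ j = 3 ∨ j = 7 :=
      (by decide : ∀ j : Fin 8, (((2 : Fin 8), j) ∈ gadgetPairs ∨ (j, (2 : Fin 8)) ∈ gadgetPairs) → j = 0 ∨ j = 3 ∨ j = 7) j hj
    rcases hj' with rfl | rfl | rfl
    · exact Or.inl hu
    · exact Or.inr (Or.inl hu)
    · exact Or.inr (Or.inr hu)

lemma adj3_cases (h : (reduced A).Adj (gad e 3) u) :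
    u = gad e 2 ∨ u = gad e 4 ∨ u = gad e 5 := by
  rcases adj_gad_cases h with ⟨hi, hu⟩ | ⟨hi, hu⟩ | ⟨j, hu, hj⟩
  · exact absurd hi (by decide)
  · exact absurd hi (by decide)
  · have hj' : j = 2 ∨ j = 4 ∨ j = 5 :=
      (by decide : ∀ j : Fin 8, (((3 : Fin 8), j) ∈ gadgetPairs ∨ (j, (3 : Fin 8)) ∈ gadgetPairs) → j = 2 ∨ j = 4 ∨ j = 5) j hj
    rcases hj' with rfl | rfl | rfl
    · exact Or.inl hu
    · exact Or.inr (Or.inl hu)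
    · exact Or.inr (Or.inr hu)

lemma adj4_cases (h : (reduced A).Adj (gad e 4) u) : u = gad e 3 := by
  rcases adj_gad_cases h with ⟨hi, hu⟩ | ⟨hi, hu⟩ | ⟨j, hu, hj⟩
  · exact absurd hi (by decide)
  · exact absurd hi (by decide)
  · have hj' : j = 3 :=
      (by decide : ∀ j : Fin 8, (((4 : Fin 8), j) ∈ gadgetPairs ∨ (j, (4 : Fin 8)) ∈ gadgetPairs) → j = 3) j hj
    exact hj' ▸ hu

lemma adj5_cases (h : (reduced A).Adj (gad e 5) u) :
    u = orig e.2 ∨ u = gad e 3 ∨ u = gad e 6 ∨ u = gad e 7 := by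
  rcases adj_gad_cases h with ⟨hi, hu⟩ | ⟨hi, hu⟩ | ⟨j, hu, hj⟩
  · exact absurd hi (by decide)
  · exact Or.inl hu
  · have hj' : j = 3 ∨ j = 6 ∨ j = 7 :=
      (by decide : ∀ j : Fin 8, (((5 : Fin 8), j) ∈ gadgetPairs ∨ (j, (5 : Fin 8)) ∈ gadgetPairs) → j = 3 ∨ j = 6 ∨ j = 7) j hj
    rcases hj' with rfl | rfl | rfl
    · exact Or.inr (Or.inl hu)
    · exact Or.inr (Or.inr (Or.inl hu))
    · exact Or.inr (Or.inr (Or.inr hu))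

lemma adj6_cases (h : (reduced A).Adj (gad e 6) u) : u = gad e 5 := by
  rcases adj_gad_cases h with ⟨hi, hu⟩ | ⟨hi, hu⟩ | ⟨j, hu, hj⟩
  · exact absurd hi (by decide)
  · exact absurd hi (by decide)
  · have hj' : j = 5 :=
      (by decide : ∀ j : Fin 8, (((6 : Fin 8), j) ∈ gadgetPairs ∨ (j, (6 : Fin 8)) ∈ gadgetPairs) → j = 5) j hj
    exact hj' ▸ hu

lemma adj7_cases (h : (reduced A).Adj (gad e 7) u) : u = gad e 2 ∨ u = gad e 5 := by
  rcases adj_gad_cases h with ⟨hi, hu⟩ | ⟨hi, hu⟩ | ⟨j, hu, hj⟩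
  · exact absurd hi (by decide)
  · exact absurd hi (by decide)
  · have hj' : j = 2 ∨ j = 5 :=
      (by decide : ∀ j : Fin 8, (((7 : Fin 8), j) ∈ gadgetPairs ∨ (j, (7 : Fin 8)) ∈ gadgetPairs) → j = 2 ∨ j = 5) j hj
    rcases hj' with rfl | rfl
    · exact Or.inl hu
    · exact Or.inr hu

end AdjIdx
/- ## gadget value lemmas -/

section Gadget

variable {V : Type} [DecidableEq V] {A : Finset (V × V)} {e : V × V} {X : Finset (RedV V)}

/-- Backward entry at `d = gad e 5` into a fresh gadget: the value is at least 2. -/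
lemma bwd_val (he : e ∈ A) (hg : ∀ i, gad e i ∈ X) :
    2 ≤ geo (reduced A) X (gad e 5) := by
  -- value of d₀ after moving d → d₀ is 0
  have hd0 : geo (reduced A) (X.erase (gad e 5)) (gad e 6) = 0 := by
    refine geo_no_moves _ (Finset.mem_erase.2 ⟨gad_ne (by decide), hg 6⟩) ?_
    intro u hadj hu
    rw [adj6_cases hadj] at hu
    exact (Finset.mem_erase.1 (Finset.mem_of_mem_erase hu)).1 rfl
  -- value of f after moving d → f is 1
  have hmemY2 : ∀ i : Fin 8, i ≠ 5 → i ≠ 7 → gad e i ∈ (X.erase (gad e 5)).erase (gad e 7) :=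
    fun i h5 h7 => Finset.mem_erase.2 ⟨gad_ne h7, Finset.mem_erase.2 ⟨gad_ne h5, hg i⟩⟩
  have hmemY3 : ∀ i : Fin 8, i ≠ 5 → i ≠ 7 → i ≠ 2 →
      gad e i ∈ ((X.erase (gad e 5)).erase (gad e 7)).erase (gad e 2) :=
    fun i h5 h7 h2 => Finset.mem_erase.2 ⟨gad_ne h2, hmemY2 i h5 h7⟩
  -- a has a zero option (a₀), hence value ≠ 0
  have ha_ne : geo (reduced A) (((X.erase (gad e 5)).erase (gad e 7)).erase (gad e 2))
      (gad e 0) ≠ 0 := by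
    refine geo_ne_zero_of _ (hmemY3 0 (by decide) (by decide) (by decide))
      (hmemY3 1 (by decide) (by decide) (by decide)) (gad_ne (by decide))
      (adj_gg he (Or.inl (by decide)) (by decide)) ?_
    refine geo_no_moves _ (Finset.mem_erase.2 ⟨gad_ne (by decide),
      hmemY3 1 (by decide) (by decide) (by decide)⟩) ?_
    intro u hadj hu
    rw [adj1_cases hadj] at hu
    exact (Finset.mem_erase.1 (Finset.mem_of_mem_erase hu)).1 rfl
  -- c has exactly the option c₀, hence value 1, in particular ≠ 0
  have hc : geo (reduced A) (((X.erase (gad e 5)).erase (gad e 7)).erase (gad e 2))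
      (gad e 3) = 1 := by
    have hfil : ((((X.erase (gad e 5)).erase (gad e 7)).erase (gad e 2)).erase (gad e 3)).filter
        (fun v => (reduced A).Adj (gad e 3) v) = {gad e 4} := by
      ext u
      simp only [Finset.mem_filter, Finset.mem_erase, Finset.mem_singleton]
      constructor
      · rintro ⟨⟨h3, h2, h7, h5, hX⟩, hadj⟩
        rcases adj3_cases hadj with rfl | rfl | rfl
        · exact absurd rfl h2
        · rfl
        · exact absurd rfl h5
      · rintro rfl
        exact ⟨⟨gad_ne (by decide), gad_ne (by decide), gad_ne (by decide), gad_ne (by decide),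
          hg 4⟩, adj_gg he (Or.inl (by decide)) (by decide)⟩
    rw [geo_step _ (hmemY3 3 (by decide) (by decide) (by decide)) hfil]
    have h4 : geo (reduced A)
        ((((X.erase (gad e 5)).erase (gad e 7)).erase (gad e 2)).erase (gad e 3))
        (gad e 4) = 0 := by
      refine geo_no_moves _ (Finset.mem_erase.2 ⟨gad_ne (by decide),
        hmemY3 4 (by decide) (by decide) (by decide)⟩) ?_
      intro u hadj hu
      rw [adj4_cases hadj] at hu
      exact (Finset.mem_erase.1 (Finset.mem_of_mem_erase hu)).1 rfl
    rw [Finset.image_singleton, h4]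
    exact mex_eq_one (by simp) (by simp)
  -- b after d, f used has value 0
  have hb : geo (reduced A) ((X.erase (gad e 5)).erase (gad e 7)) (gad e 2) = 0 := by
    have hfil : (((X.erase (gad e 5)).erase (gad e 7)).erase (gad e 2)).filter
        (fun v => (reduced A).Adj (gad e 2) v) = {gad e 0, gad e 3} := by
      ext u
      simp only [Finset.mem_filter, Finset.mem_erase, Finset.mem_insert, Finset.mem_singleton]
      constructor
      · rintro ⟨⟨h2, h7, h5, hX⟩, hadj⟩
        rcases adj2_cases hadj with rfl | rfl | rfl
        · exact Or.inl rfl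
        · exact Or.inr rfl
        · exact absurd rfl h7
      · rintro (rfl | rfl)
        · exact ⟨⟨gad_ne (by decide), gad_ne (by decide), gad_ne (by decide), hg 0⟩,
            adj_gg he (Or.inr (by decide)) (by decide)⟩
        · exact ⟨⟨gad_ne (by decide), gad_ne (by decide), gad_ne (by decide), hg 3⟩,
            adj_gg he (Or.inl (by decide)) (by decide)⟩
    rw [geo_step _ (hmemY2 2 (by decide) (by decide)) hfil]
    apply mex_eq_zero
    simp only [Finset.image_insert, Finset.image_singleton, Finset.mem_insert,
      Finset.mem_singleton]
    rintro (h | h)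
    · exact ha_ne h.symm
    · rw [hc] at h; exact absurd h (by decide)
  -- f after d used has value 1
  have hf : geo (reduced A) (X.erase (gad e 5)) (gad e 7) = 1 := by
    have hfil : (((X.erase (gad e 5)).erase (gad e 7))).filter
        (fun v => (reduced A).Adj (gad e 7) v) = {gad e 2} := by
      ext u
      simp only [Finset.mem_filter, Finset.mem_erase, Finset.mem_singleton]
      constructor
      · rintro ⟨⟨h7, h5, hX⟩, hadj⟩
        rcases adj7_cases hadj with rfl | rfl
        · rfl
        · exact absurd rfl h5
      · rintro rfl
        exact ⟨⟨gad_ne (by decide), gad_ne (by decide), hg 2⟩,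
          adj_gg he (Or.inr (by decide)) (by decide)⟩
    rw [geo_step _ (Finset.mem_erase.2 ⟨gad_ne (by decide), hg 7⟩) hfil]
    rw [Finset.image_singleton, hb]
    exact mex_eq_one (by simp) (by simp)
  exact two_le_geo_of _ (hg 5) (hg 6) (gad_ne (by decide))
    (adj_gg he (Or.inl (by decide)) (by decide)) hd0
    (hg 7) (gad_ne (by decide)) (adj_gg he (Or.inr (by decide)) (by decide)) hf

end Gadget
section Gadget2

variable {V : Type} [DecidableEq V] {A : Finset (V × V)} {e : V × V} {X : Finset (RedV V)}

/-- Value of `d` after the forward path `a, b, c` has been used, dead exit. -/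
lemma fwd_d_dead (he : e ∈ A) (hg : ∀ i, gad e i ∈ X) (h2 : orig e.2 ∉ X) :
    geo (reduced A) (((X.erase (gad e 0)).erase (gad e 2)).erase (gad e 3)) (gad e 5) = 1 := by
  have hmem : ∀ i : Fin 8, i ≠ 0 → i ≠ 2 → i ≠ 3 →
      gad e i ∈ ((X.erase (gad e 0)).erase (gad e 2)).erase (gad e 3) :=
    fun i a b c => Finset.mem_erase.2 ⟨gad_ne c, Finset.mem_erase.2 ⟨gad_ne b,
      Finset.mem_erase.2 ⟨gad_ne a, hg i⟩⟩⟩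
  have hmem4 : ∀ i : Fin 8, i ≠ 0 → i ≠ 2 → i ≠ 3 → i ≠ 5 →
      gad e i ∈ (((X.erase (gad e 0)).erase (gad e 2)).erase (gad e 3)).erase (gad e 5) :=
    fun i a b c d => Finset.mem_erase.2 ⟨gad_ne d, hmem i a b c⟩
  have hfil : ((((X.erase (gad e 0)).erase (gad e 2)).erase (gad e 3)).erase (gad e 5)).filter
      (fun v => (reduced A).Adj (gad e 5) v) = {gad e 6, gad e 7} := by
    ext u
    simp only [Finset.mem_filter, Finset.mem_erase, Finset.mem_insert, Finset.mem_singleton]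
    constructor
    · rintro ⟨⟨h5, h3, h2', h0, hX⟩, hadj⟩
      rcases adj5_cases hadj with rfl | rfl | rfl | rfl
      · exact absurd hX h2
      · exact absurd rfl h3
      · exact Or.inl rfl
      · exact Or.inr rfl
    · rintro (rfl | rfl)
      · exact ⟨⟨gad_ne (by decide), gad_ne (by decide), gad_ne (by decide), gad_ne (by decide),
          hg 6⟩, adj_gg he (Or.inl (by decide)) (by decide)⟩
      · exact ⟨⟨gad_ne (by decide), gad_ne (by decide), gad_ne (by decide), gad_ne (by decide),
          hg 7⟩, adj_gg he (Or.inr (by decide)) (by decide)⟩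
  rw [geo_step _ (hmem 5 (by decide) (by decide) (by decide)) hfil]
  have h6 : geo (reduced A)
      ((((X.erase (gad e 0)).erase (gad e 2)).erase (gad e 3)).erase (gad e 5)) (gad e 6) = 0 := by
    refine geo_no_moves _ (hmem4 6 (by decide) (by decide) (by decide) (by decide)) ?_
    intro u hadj hu
    rw [adj6_cases hadj] at hu
    exact (Finset.mem_erase.1 (Finset.mem_of_mem_erase hu)).1 rfl
  have h7 : geo (reduced A)
      ((((X.erase (gad e 0)).erase (gad e 2)).erase (gad e 3)).erase (gad e 5)) (gad e 7) = 0 := by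
    refine geo_no_moves _ (hmem4 7 (by decide) (by decide) (by decide) (by decide)) ?_
    intro u hadj hu
    rcases adj7_cases hadj with rfl | rfl
    · exact (Finset.mem_erase.1 (Finset.mem_of_mem_erase (Finset.mem_of_mem_erase
        (Finset.mem_of_mem_erase hu)))).1 rfl
    · exact (Finset.mem_erase.1 (Finset.mem_of_mem_erase hu)).1 rfl
  rw [Finset.image_insert, Finset.image_singleton, h6, h7]
  exact mex_eq_one (by simp) (by simp)

/-- Value of `d` after the forward path `a, b, c` has been used, live exit with value `w`. -/
lemma fwd_d_live (he : e ∈ A) (hg : ∀ i, gad e i ∈ X) (h2 : orig e.2 ∈ X) {w : ℕ}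
    (hw : geo (reduced A)
      ((((X.erase (gad e 0)).erase (gad e 2)).erase (gad e 3)).erase (gad e 5)) (orig e.2) = w) :
    (w = 1 →
      geo (reduced A) (((X.erase (gad e 0)).erase (gad e 2)).erase (gad e 3)) (gad e 5) = 2) ∧
    (2 ≤ w →
      geo (reduced A) (((X.erase (gad e 0)).erase (gad e 2)).erase (gad e 3)) (gad e 5) = 1) := by
  have hmem : ∀ i : Fin 8, i ≠ 0 → i ≠ 2 → i ≠ 3 →
      gad e i ∈ ((X.erase (gad e 0)).erase (gad e 2)).erase (gad e 3) :=
    fun i a b c => Finset.mem_erase.2 ⟨gad_ne c, Finset.mem_erase.2 ⟨gad_ne b,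
      Finset.mem_erase.2 ⟨gad_ne a, hg i⟩⟩⟩
  have hmem4 : ∀ i : Fin 8, i ≠ 0 → i ≠ 2 → i ≠ 3 → i ≠ 5 →
      gad e i ∈ (((X.erase (gad e 0)).erase (gad e 2)).erase (gad e 3)).erase (gad e 5) :=
    fun i a b c d => Finset.mem_erase.2 ⟨gad_ne d, hmem i a b c⟩
  have hfil : ((((X.erase (gad e 0)).erase (gad e 2)).erase (gad e 3)).erase (gad e 5)).filter
      (fun v => (reduced A).Adj (gad e 5) v) = {orig e.2, gad e 6, gad e 7} := by
    ext u
    simp only [Finset.mem_filter, Finset.mem_erase, Finset.mem_insert, Finset.mem_singleton]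
    constructor
    · rintro ⟨⟨h5, h3, h2', h0, hX⟩, hadj⟩
      rcases adj5_cases hadj with rfl | rfl | rfl | rfl
      · exact Or.inl rfl
      · exact absurd rfl h3
      · exact Or.inr (Or.inl rfl)
      · exact Or.inr (Or.inr rfl)
    · rintro (rfl | rfl | rfl)
      · exact ⟨⟨(orig_ne_gad _ _ _), (orig_ne_gad _ _ _), (orig_ne_gad _ _ _),
          (orig_ne_gad _ _ _), h2⟩, ((adj_og2 he).symm)⟩
      · exact ⟨⟨gad_ne (by decide), gad_ne (by decide), gad_ne (by decide), gad_ne (by decide),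
          hg 6⟩, adj_gg he (Or.inl (by decide)) (by decide)⟩
      · exact ⟨⟨gad_ne (by decide), gad_ne (by decide), gad_ne (by decide), gad_ne (by decide),
          hg 7⟩, adj_gg he (Or.inr (by decide)) (by decide)⟩
  have h6 : geo (reduced A)
      ((((X.erase (gad e 0)).erase (gad e 2)).erase (gad e 3)).erase (gad e 5)) (gad e 6) = 0 := by
    refine geo_no_moves _ (hmem4 6 (by decide) (by decide) (by decide) (by decide)) ?_
    intro u hadj hu
    rw [adj6_cases hadj] at hu
    exact (Finset.mem_erase.1 (Finset.mem_of_mem_erase hu)).1 rfl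
  have h7 : geo (reduced A)
      ((((X.erase (gad e 0)).erase (gad e 2)).erase (gad e 3)).erase (gad e 5)) (gad e 7) = 0 := by
    refine geo_no_moves _ (hmem4 7 (by decide) (by decide) (by decide) (by decide)) ?_
    intro u hadj hu
    rcases adj7_cases hadj with rfl | rfl
    · exact (Finset.mem_erase.1 (Finset.mem_of_mem_erase (Finset.mem_of_mem_erase
        (Finset.mem_of_mem_erase hu)))).1 rfl
    · exact (Finset.mem_erase.1 (Finset.mem_of_mem_erase hu)).1 rfl
  constructor
  · intro hw1
    rw [geo_step _ (hmem 5 (by decide) (by decide) (by decide)) hfil,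
      Finset.image_insert, Finset.image_insert, Finset.image_singleton, h6, h7, hw, hw1]
    exact mex_eq_two (by simp) (by simp) (by simp)
  · intro hw2
    rw [geo_step _ (hmem 5 (by decide) (by decide) (by decide)) hfil,
      Finset.image_insert, Finset.image_insert, Finset.image_singleton, h6, h7, hw]
    refine mex_eq_one (by simp) ?_
    simp only [Finset.mem_insert, Finset.mem_singleton]
    push_neg
    exact ⟨by omega, by simp, by simp⟩

/-- Main forward computation: the value of entering a fresh gadget at `a`, as a function
of the value of `d` after the path `a, b, c`. -/
lemma fwd_core (he : e ∈ A) (hg : ∀ i, gad e i ∈ X) (h1 : orig e.1 ∉ X) :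
    (geo (reduced A) (((X.erase (gad e 0)).erase (gad e 2)).erase (gad e 3)) (gad e 5) = 1 →
      geo (reduced A) X (gad e 0) = 2) ∧
    (geo (reduced A) (((X.erase (gad e 0)).erase (gad e 2)).erase (gad e 3)) (gad e 5) = 2 →
      geo (reduced A) X (gad e 0) = 1) := by
  have hmem1 : ∀ i : Fin 8, i ≠ 0 → gad e i ∈ X.erase (gad e 0) :=
    fun i a => Finset.mem_erase.2 ⟨gad_ne a, hg i⟩
  have hmem2 : ∀ i : Fin 8, i ≠ 0 → i ≠ 2 → gad e i ∈ (X.erase (gad e 0)).erase (gad e 2) :=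
    fun i a b => Finset.mem_erase.2 ⟨gad_ne b, hmem1 i a⟩
  have hmem3 : ∀ i : Fin 8, i ≠ 0 → i ≠ 2 → i ≠ 3 →
      gad e i ∈ ((X.erase (gad e 0)).erase (gad e 2)).erase (gad e 3) :=
    fun i a b c => Finset.mem_erase.2 ⟨gad_ne c, hmem2 i a b⟩
  -- c₀'s value after a, b, c used
  have h34 : geo (reduced A) (((X.erase (gad e 0)).erase (gad e 2)).erase (gad e 3))
      (gad e 4) = 0 := by
    refine geo_no_moves _ (hmem3 4 (by decide) (by decide) (by decide)) ?_
    intro u hadj hu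
    rw [adj4_cases hadj] at hu
    exact (Finset.mem_erase.1 (Finset.mem_of_mem_erase hu)).1 rfl
  -- filter at c
  have hc_fil : (((X.erase (gad e 0)).erase (gad e 2)).erase (gad e 3)).filter
      (fun v => (reduced A).Adj (gad e 3) v) = {gad e 4, gad e 5} := by
    ext u
    simp only [Finset.mem_filter, Finset.mem_erase, Finset.mem_insert, Finset.mem_singleton]
    constructor
    · rintro ⟨⟨h3, h2', h0, hX⟩, hadj⟩
      rcases adj3_cases hadj with rfl | rfl | rfl
      · exact absurd rfl h2'
      · exact Or.inl rfl
      · exact Or.inr rfl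
    · rintro (rfl | rfl)
      · exact ⟨⟨gad_ne (by decide), gad_ne (by decide), gad_ne (by decide), hg 4⟩,
          adj_gg he (Or.inl (by decide)) (by decide)⟩
      · exact ⟨⟨gad_ne (by decide), gad_ne (by decide), gad_ne (by decide), hg 5⟩,
          adj_gg he (Or.inl (by decide)) (by decide)⟩
  -- the f-branch: value of d after a, b, f used is nonzero
  have hdabf_ne : geo (reduced A) (((X.erase (gad e 0)).erase (gad e 2)).erase (gad e 7))
      (gad e 5) ≠ 0 := by
    have hm5 : gad e 5 ∈ ((X.erase (gad e 0)).erase (gad e 2)).erase (gad e 7) :=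
      Finset.mem_erase.2 ⟨gad_ne (by decide), hmem2 5 (by decide) (by decide)⟩
    have hm6 : gad e 6 ∈ ((X.erase (gad e 0)).erase (gad e 2)).erase (gad e 7) :=
      Finset.mem_erase.2 ⟨gad_ne (by decide), hmem2 6 (by decide) (by decide)⟩
    refine geo_ne_zero_of _ hm5 hm6 (gad_ne (by decide))
      (adj_gg he (Or.inl (by decide)) (by decide)) ?_
    refine geo_no_moves _ (Finset.mem_erase.2 ⟨gad_ne (by decide), hm6⟩) ?_
    intro u hadj hu
    rw [adj6_cases hadj] at hu
    exact (Finset.mem_erase.1 (Finset.mem_of_mem_erase hu)).1 rfl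
  -- value of f after a, b used is 0
  have hfab : geo (reduced A) ((X.erase (gad e 0)).erase (gad e 2)) (gad e 7) = 0 := by
    have hfil : (((X.erase (gad e 0)).erase (gad e 2)).erase (gad e 7)).filter
        (fun v => (reduced A).Adj (gad e 7) v) = {gad e 5} := by
      ext u
      simp only [Finset.mem_filter, Finset.mem_erase, Finset.mem_singleton]
      constructor
      · rintro ⟨⟨h7, h2', h0, hX⟩, hadj⟩
        rcases adj7_cases hadj with rfl | rfl
        · exact absurd rfl h2'
        · rfl
      · rintro rfl
        exact ⟨⟨gad_ne (by decide), gad_ne (by decide), gad_ne (by decide), hg 5⟩,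
          adj_gg he (Or.inl (by decide)) (by decide)⟩
    rw [geo_step _ (hmem2 7 (by decide) (by decide)) hfil, Finset.image_singleton]
    apply mex_eq_zero
    simp only [Finset.mem_singleton]
    exact fun h => hdabf_ne h.symm
  -- filter at b
  have hb_fil : ((X.erase (gad e 0)).erase (gad e 2)).filter
      (fun v => (reduced A).Adj (gad e 2) v) = {gad e 3, gad e 7} := by
    ext u
    simp only [Finset.mem_filter, Finset.mem_erase, Finset.mem_insert, Finset.mem_singleton]
    constructor
    · rintro ⟨⟨h2', h0, hX⟩, hadj⟩
      rcases adj2_cases hadj with rfl | rfl | rfl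
      · exact absurd rfl h0
      · exact Or.inl rfl
      · exact Or.inr rfl
    · rintro (rfl | rfl)
      · exact ⟨⟨gad_ne (by decide), gad_ne (by decide), hg 3⟩,
          adj_gg he (Or.inl (by decide)) (by decide)⟩
      · exact ⟨⟨gad_ne (by decide), gad_ne (by decide), hg 7⟩,
          adj_gg he (Or.inl (by decide)) (by decide)⟩
  -- a₀'s value after a used
  have ha1 : geo (reduced A) (X.erase (gad e 0)) (gad e 1) = 0 := by
    refine geo_no_moves _ (hmem1 1 (by decide)) ?_
    intro u hadj hu
    rw [adj1_cases hadj] at hu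
    exact (Finset.mem_erase.1 (Finset.mem_of_mem_erase hu)).1 rfl
  -- filter at a
  have ha_fil : (X.erase (gad e 0)).filter
      (fun v => (reduced A).Adj (gad e 0) v) = {gad e 1, gad e 2} := by
    ext u
    simp only [Finset.mem_filter, Finset.mem_erase, Finset.mem_insert, Finset.mem_singleton]
    constructor
    · rintro ⟨⟨h0, hX⟩, hadj⟩
      rcases adj0_cases hadj with rfl | rfl | rfl
      · exact absurd hX h1
      · exact Or.inl rfl
      · exact Or.inr rfl
    · rintro (rfl | rfl)
      · exact ⟨⟨gad_ne (by decide), hg 1⟩, adj_gg he (Or.inl (by decide)) (by decide)⟩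
      · exact ⟨⟨gad_ne (by decide), hg 2⟩, adj_gg he (Or.inl (by decide)) (by decide)⟩
  constructor
  · intro hd
    have hc : geo (reduced A) ((X.erase (gad e 0)).erase (gad e 2)) (gad e 3) = 2 := by
      rw [geo_step _ (hmem2 3 (by decide) (by decide)) hc_fil,
        Finset.image_insert, Finset.image_singleton, h34, hd]
      exact mex_eq_two (by simp) (by simp) (by simp)
    have hb : geo (reduced A) (X.erase (gad e 0)) (gad e 2) = 1 := by
      rw [geo_step _ (hmem1 2 (by decide)) hb_fil,
        Finset.image_insert, Finset.image_singleton, hc, hfab]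
      exact mex_eq_one (by simp) (by simp)
    rw [geo_step _ (hg 0) ha_fil, Finset.image_insert, Finset.image_singleton, ha1, hb]
    exact mex_eq_two (by simp) (by simp) (by simp)
  · intro hd
    have hc : geo (reduced A) ((X.erase (gad e 0)).erase (gad e 2)) (gad e 3) = 1 := by
      rw [geo_step _ (hmem2 3 (by decide) (by decide)) hc_fil,
        Finset.image_insert, Finset.image_singleton, h34, hd]
      exact mex_eq_one (by simp) (by simp)
    have hb : geo (reduced A) (X.erase (gad e 0)) (gad e 2) = 2 := by
      rw [geo_step _ (hmem1 2 (by decide)) hb_fil,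
        Finset.image_insert, Finset.image_singleton, hc, hfab]
      exact mex_eq_two (by simp) (by simp) (by simp)
    rw [geo_step _ (hg 0) ha_fil, Finset.image_insert, Finset.image_singleton, ha1, hb]
    exact mex_eq_one (by simp) (by simp)

/-- Entering a fresh gadget at `a` whose head is dead gives value 2. -/
lemma fwd_val_dead (he : e ∈ A) (hg : ∀ i, gad e i ∈ X) (h1 : orig e.1 ∉ X)
    (h2 : orig e.2 ∉ X) : geo (reduced A) X (gad e 0) = 2 :=
  (fwd_core he hg h1).1 (fwd_d_dead he hg h2)

/-- Entering a fresh gadget at `a` whose head is live with exit value `w`. -/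
lemma fwd_val_live (he : e ∈ A) (hg : ∀ i, gad e i ∈ X) (h1 : orig e.1 ∉ X)
    (h2 : orig e.2 ∈ X) {w : ℕ}
    (hw : geo (reduced A)
      ((((X.erase (gad e 0)).erase (gad e 2)).erase (gad e 3)).erase (gad e 5)) (orig e.2) = w) :
    (w = 1 → geo (reduced A) X (gad e 0) = 1) ∧
    (2 ≤ w → geo (reduced A) X (gad e 0) = 2) := by
  obtain ⟨hl1, hl2⟩ := fwd_d_live he hg h2 hw
  exact ⟨fun h => (fwd_core he hg h1).2 (hl1 h), fun h => (fwd_core he hg h1).1 (hl2 h)⟩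

end Gadget2
section Norm

variable {V : Type} [DecidableEq V]

lemma orig_inj {a b : V} (h : (orig a : RedV V) = orig b) : a = b := by
  simpa [orig] using h

/-- After the token has travelled through the gadget of arc `e` (with tail `s`), the position
normalizes to the state where `s` is removed and the arc `e` is dead. -/
lemma exit_norm (A : Finset (V × V)) (B : Finset V) (E : Finset (V × V))
    (hE : ∀ e' ∈ E, e'.1 ∉ B) {s : V} (hs : s ∈ B) {e : V × V} (he1 : e.1 = s) {y : V}
    (hy : y ∈ B.erase s) :
    geo (reduced A)
      ((((((St A B E).erase (orig s)).erase (gad e 0)).erase (gad e 2)).erase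
        (gad e 3)).erase (gad e 5)) (orig y)
    = geo (reduced A) (St A (B.erase s) (insert e E)) (orig y) := by
  refine geo_localize_sub (reduced A) ?_ ?_ (mem_St_orig.2 hy)
  · -- R ⊆ X
    intro u hu
    rcases u with w | w | ⟨e', i⟩
    · have hw : w ∈ B.erase s := mem_St_orig.1 hu
      refine Finset.mem_erase.2 ⟨orig_ne_gad _ _ _, Finset.mem_erase.2 ⟨orig_ne_gad _ _ _,
        Finset.mem_erase.2 ⟨orig_ne_gad _ _ _, Finset.mem_erase.2 ⟨orig_ne_gad _ _ _,
        Finset.mem_erase.2 ⟨?_, mem_St_orig.2 (Finset.mem_of_mem_erase hw)⟩⟩⟩⟩⟩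
      intro hcon
      exact (Finset.mem_erase.1 hw).1 (orig_inj hcon)
    · have hw : w ∈ B.erase s := mem_St_pend.1 hu
      exact Finset.mem_erase.2 ⟨pend_ne_gad _ _ _, Finset.mem_erase.2 ⟨pend_ne_gad _ _ _,
        Finset.mem_erase.2 ⟨pend_ne_gad _ _ _, Finset.mem_erase.2 ⟨pend_ne_gad _ _ _,
        Finset.mem_erase.2 ⟨fun hcon => (by simp [orig, pend] at hcon),
        mem_St_pend.2 (Finset.mem_of_mem_erase hw)⟩⟩⟩⟩⟩
    · have hw : e' ∈ A ∧ e' ∉ insert e E := mem_St_gad.1 hu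
      have hne : e' ≠ e := fun hcon => hw.2 (hcon ▸ Finset.mem_insert_self e E)
      have hgne : ∀ j : Fin 8, (gad e' i : RedV V) ≠ gad e j :=
        fun j hcon => hne ((gad_inj_iff e' e i j).1 hcon).1
      exact Finset.mem_erase.2 ⟨hgne 5, Finset.mem_erase.2 ⟨hgne 3,
        Finset.mem_erase.2 ⟨hgne 2, Finset.mem_erase.2 ⟨hgne 0,
        Finset.mem_erase.2 ⟨fun hcon => orig_ne_gad s e' i hcon.symm,
        mem_St_gad.2 ⟨hw.1, fun hcon => hw.2 (Finset.mem_insert_of_mem hcon)⟩⟩⟩⟩⟩⟩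
  · -- closure
    intro u hu v hv hadj
    rcases St_closed u hu v hadj with h | ⟨e'', he'', hcase⟩ | ⟨w, hw, rfl⟩
    · exact h
    · have hvSt : v ∈ St A B E :=
        Finset.mem_of_mem_erase (Finset.mem_of_mem_erase (Finset.mem_of_mem_erase
          (Finset.mem_of_mem_erase (Finset.mem_of_mem_erase hv))))
      rcases Finset.mem_insert.1 he'' with rfl | he''E
      · rcases hcase with ⟨rfl, hmem⟩ | ⟨rfl, hmem⟩
        · rw [he1] at hmem
          exact absurd hmem (Finset.notMem_erase s B)
        · exact absurd rfl (Finset.mem_erase.1 hv).1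
      · rcases hcase with ⟨rfl, hmem⟩ | ⟨rfl, hmem⟩
        · exact absurd (Finset.mem_of_mem_erase hmem) (hE e'' he''E)
        · exact absurd he''E (mem_St_gad.1 hvSt).2
    · have hvSt : orig w ∈ St A B E :=
        Finset.mem_of_mem_erase (Finset.mem_of_mem_erase (Finset.mem_of_mem_erase
          (Finset.mem_of_mem_erase (Finset.mem_of_mem_erase hv))))
      have hwB : w ∈ B := mem_St_orig.1 hvSt
      have hws : w ≠ s := by
        intro hcon
        have h5 := Finset.mem_of_mem_erase (Finset.mem_of_mem_erase (Finset.mem_of_mem_erase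
          (Finset.mem_of_mem_erase hv)))
        rw [hcon] at h5
        exact (Finset.mem_erase.1 h5).1 rfl
      exact absurd (Finset.mem_erase.2 ⟨hws, hwB⟩) hw

lemma init_norm [Fintype V] (A : Finset (V × V)) (s : V) :
    geo (reduced A) Finset.univ (orig s) = geo (reduced A) (St A Finset.univ ∅) (orig s) := by
  refine geo_localize_sub (reduced A) (Finset.subset_univ _) ?_ (mem_St_orig.2 (Finset.mem_univ s))
  intro u hu v _ hadj
  rcases St_closed u hu v hadj with h | ⟨e'', he'', _⟩ | ⟨w, hw, _⟩
  · exact h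
  · exact absurd he'' (Finset.notMem_empty e'')
  · exact absurd (Finset.mem_univ w) hw

end Norm
/- ## the main induction -/

lemma main_lemma {V : Type} [DecidableEq V] (A : Finset (V × V)) :
    ∀ B : Finset V, ∀ E : Finset (V × V), (∀ e' ∈ E, e'.1 ∉ B) → ∀ s ∈ B,
      (dgeo A B s = 0 → geo (reduced A) (St A B E) (orig s) = 1) ∧
      (dgeo A B s ≠ 0 → 2 ≤ geo (reduced A) (St A B E) (orig s)) := by
  intro B
  induction B using Finset.strongInduction with
  | _ B ih =>
    intro E hE s hs
    have hsSt : orig s ∈ St A B E := mem_St_orig.2 hs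
    have hpend0 : geo (reduced A) ((St A B E).erase (orig s)) (pend s) = 0 := by
      refine geo_no_moves _ (Finset.mem_erase.2 ⟨Ne.symm (orig_ne_pend s s),
        mem_St_pend.2 hs⟩) ?_
      intro u hadj hu
      rw [adj_pend_cases hadj] at hu
      exact (Finset.mem_erase.1 (Finset.mem_of_mem_erase hu)).1 rfl
    have hpmem : pend s ∈ ((St A B E).erase (orig s)).filter
        (fun v => (reduced A).Adj (orig s) v) :=
      Finset.mem_filter.2 ⟨Finset.mem_erase.2 ⟨Ne.symm (orig_ne_pend s s),
        mem_St_pend.2 hs⟩, adj_op s⟩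
    have h0mem : (0 : ℕ) ∈ (((St A B E).erase (orig s)).filter
        (fun v => (reduced A).Adj (orig s) v)).image
          (fun v => geo (reduced A) ((St A B E).erase (orig s)) v) :=
      Finset.mem_image.2 ⟨pend s, hpmem, hpend0⟩
    have hgmem : ∀ (e : V × V), e ∈ A → e ∉ E → ∀ i, gad e i ∈ (St A B E).erase (orig s) :=
      fun e heA heE i => Finset.mem_erase.2 ⟨fun h => orig_ne_gad s e i h.symm,
        mem_St_gad.2 ⟨heA, heE⟩⟩
    have hos : orig s ∉ (St A B E).erase (orig s) := Finset.notMem_erase _ _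
    by_cases hdg : dgeo A B s = 0
    · refine ⟨fun _ => ?_, fun hcon => absurd hdg hcon⟩
      rw [geo_mem _ hsSt]
      refine mex_eq_one h0mem ?_
      intro h1mem
      obtain ⟨u, hu, hval⟩ := Finset.mem_image.1 h1mem
      obtain ⟨humem, hadj⟩ := Finset.mem_filter.1 hu
      rcases adj_orig_cases hadj with rfl | ⟨e, heA, ⟨he1, rfl⟩ | ⟨he2, rfl⟩⟩
      · exact absurd (hpend0.symm.trans hval) (by decide)
      · have heE : e ∉ E := (mem_St_gad.1 (Finset.mem_of_mem_erase humem)).2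
        have hX1 : orig e.1 ∉ (St A B E).erase (orig s) := by rw [← he1]; exact hos
        by_cases hy : e.2 ∈ B.erase s
        · have h2 : orig e.2 ∈ (St A B E).erase (orig s) :=
            Finset.mem_erase.2 ⟨fun hcon => (Finset.mem_erase.1 hy).1 (orig_inj hcon),
              mem_St_orig.2 (Finset.mem_of_mem_erase hy)⟩
          have hEins : ∀ e' ∈ insert e E, e'.1 ∉ B.erase s := by
            intro e' he'
            rcases Finset.mem_insert.1 he' with rfl | he'E
            · rw [← he1]; exact Finset.notMem_erase s B
            · exact fun hmem => hE e' he'E (Finset.mem_of_mem_erase hmem)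
          have hw := exit_norm A B E hE hs he1.symm hy
          have hA2 : (s, e.2) ∈ A := by rw [he1, Prod.mk.eta]; exact heA
          have hihr := (ih (B.erase s) (Finset.erase_ssubset hs) (insert e E) hEins e.2 hy).2
            (dgeo_all hs hdg e.2 hy hA2)
          have hval2 := (fwd_val_live heA (hgmem e heA heE) hX1 h2 hw).2 hihr
          exact absurd (hval2.symm.trans hval) (by decide)
        · have h2 : orig e.2 ∉ (St A B E).erase (orig s) := by
            intro hcon
            apply hy
            refine Finset.mem_erase.2 ⟨?_, mem_St_orig.1 (Finset.mem_of_mem_erase hcon)⟩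
            intro hcon2
            exact (Finset.mem_erase.1 hcon).1 (by rw [hcon2])
          have hval2 := fwd_val_dead heA (hgmem e heA heE) hX1 h2
          exact absurd (hval2.symm.trans hval) (by decide)
      · have heE : e ∉ E := (mem_St_gad.1 (Finset.mem_of_mem_erase humem)).2
        have hge := bwd_val heA (hgmem e heA heE)
        rw [hval] at hge
        exact absurd hge (by decide)
    · refine ⟨fun hcon => absurd hcon hdg, fun _ => ?_⟩
      rw [geo_mem _ hsSt]
      obtain ⟨v, hv, hvA, hv0⟩ := dgeo_exists hs hdg
      have heE : ((s, v) : V × V) ∉ E := fun hcon => hE (s, v) hcon hs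
      have hX1 : orig ((s, v) : V × V).1 ∉ (St A B E).erase (orig s) := hos
      have h2 : orig ((s, v) : V × V).2 ∈ (St A B E).erase (orig s) :=
        Finset.mem_erase.2 ⟨fun hcon => (Finset.mem_erase.1 hv).1 (orig_inj hcon),
          mem_St_orig.2 (Finset.mem_of_mem_erase hv)⟩
      have hEins : ∀ e' ∈ insert ((s, v) : V × V) E, e'.1 ∉ B.erase s := by
        intro e' he'
        rcases Finset.mem_insert.1 he' with rfl | he'E
        · exact Finset.notMem_erase s B
        · exact fun hmem => hE e' he'E (Finset.mem_of_mem_erase hmem)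
      have hw := exit_norm A B E hE hs (rfl : ((s, v) : V × V).1 = s) hv
      have hih1 := (ih (B.erase s) (Finset.erase_ssubset hs) (insert (s, v) E) hEins v hv).1 hv0
      have hval1 := (fwd_val_live hvA (hgmem (s, v) hvA heE) hX1 h2 hw).1 hih1
      exact two_le_mex h0mem (Finset.mem_image.2 ⟨gad (s, v) 0,
        Finset.mem_filter.2 ⟨hgmem (s, v) hvA heE 0, adj_og1 hvA⟩, hval1⟩)

/-- for a finite digraph `D` with arc set `A` and vertex `s`, and reduced
undirected graph `D'`: if `(D,s)` is a P-position of Directed Geography (`g⃗(D,s) = 0`)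
then `g(D',s) = 1`; if `(D,s)` is an N-position (`g⃗(D,s) ≠ 0`) then `g(D',s) ≥ 2`.
In particular `g(D',s) = 1 ↔ g⃗(D,s) = 0`. -/
theorem stmt8 {V : Type} [Fintype V] [DecidableEq V] (A : Finset (V × V)) (s : V) :
    (dgeo A Finset.univ s = 0 → geo (reduced A) Finset.univ (orig s) = 1) ∧
    (dgeo A Finset.univ s ≠ 0 → 2 ≤ geo (reduced A) Finset.univ (orig s)) ∧
    (geo (reduced A) Finset.univ (orig s) = 1 ↔ dgeo A Finset.univ s = 0) := by
  obtain ⟨h1, h2⟩ := main_lemma A Finset.univ ∅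
    (fun e' he' => absurd he' (Finset.notMem_empty e')) s (Finset.mem_univ s)
  rw [init_norm A s]
  refine ⟨h1, h2, ?_, h1⟩
  intro hgeo
  by_contra hd
  have := h2 hd
  omega
end

section
/- Let G be a finite simple graph with vertex s, and let G⁺ be obtained from G by adding four new vertices start, start₀, start₂, start₂₀ and the edges {start, start₀}, {start, start₂}, {start₂, start₂₀}, {start₂, s} (the Prelude gadget). Then g(G⁺, start) = 1 if g(G,s) = 1, and g(G⁺, start) = 2 if g(G,s) ≠ 1. -/
/-- Base edge relation of the Prelude-augmented graph `G⁺`: the four new vertices are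
`start = 0`, `start₀ = 1`, `start₂ = 2`, `start₂₀ = 3` (the `Fin 4` summand); the new
edges are `{start, start₀}`, `{start, start₂}`, `{start₂, start₂₀}`, `{start₂, s}`. -/
def preRel {V : Type} (G : SimpleGraph V) (s : V) : V ⊕ Fin 4 → V ⊕ Fin 4 → Prop
  | Sum.inl u, Sum.inl w => G.Adj u w
  | Sum.inr i, Sum.inl u => i = 2 ∧ u = s
  | Sum.inr i, Sum.inr j => (i, j) ∈ [((0 : Fin 4), (1 : Fin 4)), (0, 2), (2, 3)]
  | _, _ => False

instance {V : Type} [DecidableEq V] (G : SimpleGraph V) [DecidableRel G.Adj] (s : V) :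
    DecidableRel (preRel G s) := fun u w => by
  rcases u with u | i <;> rcases w with w | j <;> simp only [preRel] <;> infer_instance

/-- The graph `G⁺` obtained from `G` by appending the Prelude gadget in front of `s`. -/
def preludeGraph {V : Type} (G : SimpleGraph V) (s : V) : SimpleGraph (V ⊕ Fin 4) where
  Adj u w := u ≠ w ∧ (preRel G s u w ∨ preRel G s w u)
  symm := ⟨fun u w h => ⟨h.1.symm, h.2.symm⟩⟩
  loopless := ⟨fun u h => h.1 rfl⟩

instance {V : Type} [DecidableEq V] (G : SimpleGraph V) [DecidableRel G.Adj] (s : V) :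
    DecidableRel (preludeGraph G s).Adj := fun u w =>
  inferInstanceAs (Decidable (u ≠ w ∧ (preRel G s u w ∨ preRel G s w u)))

lemma mex_eq {s : Finset ℕ} {k : ℕ} (h1 : k ∉ s) (h2 : ∀ m < k, m ∈ s) : mex s = k := by
  have hne : {n : ℕ | n ∉ s}.Nonempty := ⟨k, h1⟩
  have hk : mex s ∈ {n : ℕ | n ∉ s} := Nat.sInf_mem hne
  have hle : mex s ≤ k := Nat.sInf_le h1
  rcases lt_or_eq_of_le hle with h | h
  · exact absurd (h2 _ h) hk
  · exact h

section
variable {V : Type} [DecidableEq V] (G : SimpleGraph V) [DecidableRel G.Adj] (s : V)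

lemma adj_inl_inl (v w : V) :
    (preludeGraph G s).Adj (Sum.inl v) (Sum.inl w) ↔ G.Adj v w := by
  constructor
  · rintro ⟨-, h | h⟩
    · exact h
    · exact h.symm
  · intro h
    exact ⟨by simpa using h.ne, Or.inl h⟩

lemma adj_inl_inr (v : V) (j : Fin 4) :
    (preludeGraph G s).Adj (Sum.inl v) (Sum.inr j) ↔ j = 2 ∧ v = s := by
  show (_ ≠ _ ∧ (False ∨ _)) ↔ _
  simp [preRel]

lemma adj_inr_inl (v : V) (j : Fin 4) :
    (preludeGraph G s).Adj (Sum.inr j) (Sum.inl v) ↔ j = 2 ∧ v = s := by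
  show (_ ≠ _ ∧ (_ ∨ False)) ↔ _
  simp [preRel]

lemma adj_inr_inr (i j : Fin 4) :
    (preludeGraph G s).Adj (Sum.inr i) (Sum.inr j) ↔
      ((i,j) ∈ [((0:Fin 4),(1:Fin 4)),(0,2),(2,3)] ∨ (j,i) ∈ [((0:Fin 4),(1:Fin 4)),(0,2),(2,3)]) := by
  show (_ ≠ _ ∧ _) ↔ _
  simp only [preRel, ne_eq, Sum.inr.injEq]
  constructor
  · exact And.right
  · intro h
    refine ⟨?_, h⟩
    rintro rfl
    fin_cases i <;> exact absurd h (by decide)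

lemma erase_disjSum_inl (A : Finset V) (T : Finset (Fin 4)) (v : V) :
    (A.disjSum T).erase (Sum.inl v) = (A.erase v).disjSum T := by
  ext x; rcases x with w | j <;> simp

lemma erase_disjSum_inr (A : Finset V) (T : Finset (Fin 4)) (j : Fin 4) :
    (A.disjSum T).erase (Sum.inr j) = A.disjSum (T.erase j) := by
  ext x; rcases x with w | i <;> simp

lemma geo_inl (A : Finset V) : ∀ (T : Finset (Fin 4)), (2 : Fin 4) ∉ T → ∀ v : V,
    geo (preludeGraph G s) (A.disjSum T) (Sum.inl v) = geo G A v := by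
  induction A using Finset.strongInduction with
  | _ A ih =>
    intro T hT v
    by_cases hv : v ∈ A
    · rw [geo, geo, dif_pos hv, dif_pos (by simpa using hv)]
      congr 1
      rw [erase_disjSum_inl]
      have hfil : ((A.erase v).disjSum T).filter (fun x => (preludeGraph G s).Adj (Sum.inl v) x)
          = ((A.erase v).filter (fun w => G.Adj v w)).map ⟨Sum.inl, Sum.inl_injective⟩ := by
        ext x
        rcases x with w | j
        · simp [adj_inl_inl]
        · simp only [Finset.mem_filter, Finset.inr_mem_disjSum, adj_inl_inr, Finset.mem_map]
          constructor
          · rintro ⟨hj, rfl, -⟩; exact absurd hj hT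
          · rintro ⟨w, -, h⟩; exact absurd h (by simp)
      rw [hfil, Finset.map_eq_image, Finset.image_image]
      apply Finset.image_congr
      intro w hw
      simp only [Function.comp]
      exact ih (A.erase v) (Finset.erase_ssubset hv) T hT w
    · rw [geo, geo, dif_neg hv, dif_neg (by simpa using hv)]

end

section
variable {V : Type} [Fintype V] [DecidableEq V] (G : SimpleGraph V) [DecidableRel G.Adj] (s : V)

lemma mex_empty : mex (∅ : Finset ℕ) = 0 := mex_eq (by simp) (by omega)

lemma geo_inr1 (T : Finset (Fin 4)) (hT : (0 : Fin 4) ∉ T) :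
    geo (preludeGraph G s) ((Finset.univ : Finset V).disjSum T) (Sum.inr 1) = 0 := by
  by_cases h1 : (1 : Fin 4) ∈ T
  · rw [geo, dif_pos (by simpa using h1)]
    have hfil : ((((Finset.univ : Finset V).disjSum T).erase (Sum.inr 1)).filter
        (fun x => (preludeGraph G s).Adj (Sum.inr 1) x)) = ∅ := by
      rw [erase_disjSum_inr]
      ext x
      rcases x with w | j
      · simp [adj_inr_inl]
      · simp only [Finset.mem_filter, Finset.inr_mem_disjSum, Finset.notMem_empty, iff_false,
          not_and, Finset.mem_erase, adj_inr_inr]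
        rintro ⟨hj, hjT⟩ (h | h) <;> fin_cases j <;> simp_all <;> exact absurd h (by decide)
    rw [hfil, Finset.image_empty, mex_empty]
  · rw [geo, dif_neg (by simpa using h1)]

lemma geo_inr3 (T : Finset (Fin 4)) (hT : (2 : Fin 4) ∉ T) :
    geo (preludeGraph G s) ((Finset.univ : Finset V).disjSum T) (Sum.inr 3) = 0 := by
  by_cases h1 : (3 : Fin 4) ∈ T
  · rw [geo, dif_pos (by simpa using h1)]
    have hfil : ((((Finset.univ : Finset V).disjSum T).erase (Sum.inr 3)).filter
        (fun x => (preludeGraph G s).Adj (Sum.inr 3) x)) = ∅ := by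
      rw [erase_disjSum_inr]
      ext x
      rcases x with w | j
      · simp [adj_inr_inl]
      · simp only [Finset.mem_filter, Finset.inr_mem_disjSum, Finset.notMem_empty, iff_false,
          not_and, Finset.mem_erase, adj_inr_inr]
        rintro ⟨hj, hjT⟩ (h | h) <;> fin_cases j <;> simp_all <;> exact absurd h (by decide)
    rw [hfil, Finset.image_empty, mex_empty]
  · rw [geo, dif_neg (by simpa using h1)]

lemma geo_inr2 :
    geo (preludeGraph G s) ((Finset.univ : Finset V).disjSum {1,2,3}) (Sum.inr 2) =
      mex {geo G Finset.univ s, 0} := by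
  rw [geo, dif_pos (by simp)]
  rw [erase_disjSum_inr]
  have he : ({1,2,3} : Finset (Fin 4)).erase 2 = {1,3} := by decide
  rw [he]
  have hfil : (((Finset.univ : Finset V).disjSum {1,3}).filter
      (fun x => (preludeGraph G s).Adj (Sum.inr 2) x)) = {Sum.inl s, Sum.inr 3} := by
    ext x
    rcases x with w | j
    · simp [adj_inr_inl]
    · simp only [Finset.mem_filter, Finset.inr_mem_disjSum, adj_inr_inr, Finset.mem_insert,
        Finset.mem_singleton]
      constructor
      · rintro ⟨hj, h | h⟩ <;> fin_cases j <;> simp_all <;> exact absurd h (by decide)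
      · rintro (h | h)
        · exact absurd h (by simp)
        · simp only [Sum.inr.injEq] at h; subst h; refine ⟨by decide, by decide⟩
  rw [hfil, Finset.image_insert, Finset.image_singleton]
  rw [geo_inl G s _ _ (by decide), geo_inr3 G s _ (by decide)]

lemma geo_inr0 :
    geo (preludeGraph G s) Finset.univ (Sum.inr 0) =
      mex {0, mex {geo G Finset.univ s, 0}} := by
  rw [show (Finset.univ : Finset (V ⊕ Fin 4)) = (Finset.univ : Finset V).disjSum Finset.univ
    from Finset.univ_disjSum_univ.symm]
  rw [geo, dif_pos (by simp)]
  rw [erase_disjSum_inr]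
  have he : (Finset.univ : Finset (Fin 4)).erase 0 = {1,2,3} := by decide
  rw [he]
  have hfil : (((Finset.univ : Finset V).disjSum {1,2,3}).filter
      (fun x => (preludeGraph G s).Adj (Sum.inr 0) x)) = {Sum.inr 1, Sum.inr 2} := by
    ext x
    rcases x with w | j
    · simp [adj_inr_inl]
    · simp only [Finset.mem_filter, Finset.inr_mem_disjSum, adj_inr_inr, Finset.mem_insert,
        Finset.mem_singleton]
      constructor
      · rintro ⟨hj, h | h⟩ <;> fin_cases j <;> simp_all <;> exact absurd h (by decide)
      · rintro (h | h) <;> (simp only [Sum.inr.injEq] at h; subst h) <;>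
          refine ⟨by decide, by decide⟩
  rw [hfil, Finset.image_insert, Finset.image_singleton]
  rw [geo_inr1 G s _ (by decide), geo_inr2 G s]
end

/-- for the Prelude-augmented graph `G⁺`,
`g(G⁺, start) = 1` if `g(G,s) = 1`, and `g(G⁺, start) = 2` if `g(G,s) ≠ 1`. -/
theorem stmt9 {V : Type} [Fintype V] [DecidableEq V]
    (G : SimpleGraph V) [DecidableRel G.Adj] (s : V) :
    (geo G Finset.univ s = 1 →
      geo (preludeGraph G s) Finset.univ (Sum.inr 0) = 1) ∧
    (geo G Finset.univ s ≠ 1 →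
      geo (preludeGraph G s) Finset.univ (Sum.inr 0) = 2) := by
  rw [geo_inr0 G s]
  set a := geo G Finset.univ s with ha
  constructor
  · intro h
    rw [h]
    have h2 : mex {1, 0} = 2 := mex_eq (by simp) (by intro m hm; interval_cases m <;> simp)
    rw [h2]
    exact mex_eq (by simp) (by intro m hm; interval_cases m <;> simp)
  · intro h
    have h2 : mex {a, 0} = 1 := mex_eq (by simp [Ne.symm h]) (by intro m hm; interval_cases m <;> simp)
    rw [h2]
    exact mex_eq (by simp) (by intro m hm; interval_cases m <;> simp)
end
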